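/- Let b : ℝ^n → ℝ be a bounded smooth function with zero set Z_b = b⁻¹({0}). Then the closure, with respect to the supremum norm, of the set {x ↦ b(x)²·a(x) : a ∈ C_c^∞(ℝ^n)} inside C₀(ℝ^n) is exactly {f ∈ C₀(ℝ^n) : f(x) = 0 for all x ∈ Z_b}. -/

import Mathlib

open Set Metric Filter

open scoped ZeroAtInfty

/-- Smooth functions are uniformly dense on compact subsets. -/
lemma smooth_unif_dense_on_compact (D : Set (EuclideanSpace ℝ (Fin n))) (hD : IsCompact D)
    (h : EuclideanSpace ℝ (Fin n) → ℂ) (hcont : Continuous h) {ε : ℝ} (hε : 0 < ε) :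
    ∃ p : EuclideanSpace ℝ (Fin n) → ℂ, ContDiff ℝ (⊤ : ℕ∞) p ∧ ∀ x ∈ D, ‖h x - p x‖ ≤ ε := by
  haveI : CompactSpace D := isCompact_iff_compactSpace.mp hD
  set A : StarSubalgebra ℂ C(D, ℂ) :=
    { carrier := {q | ∃ p : EuclideanSpace ℝ (Fin n) → ℂ,
        ContDiff ℝ (⊤ : ℕ∞) p ∧ ∀ x : D, q x = p x}
      mul_mem' := by
        rintro q₁ q₂ ⟨p₁, hp₁, he₁⟩ ⟨p₂, hp₂, he₂⟩
        exact ⟨p₁ * p₂, hp₁.mul hp₂, fun x => by simp [he₁ x, he₂ x]⟩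
      add_mem' := by
        rintro q₁ q₂ ⟨p₁, hp₁, he₁⟩ ⟨p₂, hp₂, he₂⟩
        exact ⟨p₁ + p₂, hp₁.add hp₂, fun x => by simp [he₁ x, he₂ x]⟩
      algebraMap_mem' := fun c =>
        ⟨fun _ => c, contDiff_const, fun x => rfl⟩
      star_mem' := by
        rintro q ⟨p, hp, he⟩
        exact ⟨fun x => starRingEnd ℂ (p x),
          Complex.conjCLE.contDiff.comp hp, fun x => by
            simp [he x]⟩ }
  have hsep : A.SeparatesPoints := by
    intro x y hxy
    have hxy' : (x : EuclideanSpace ℝ (Fin n)) ≠ (y : EuclideanSpace ℝ (Fin n)) :=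
      fun hc => hxy (Subtype.ext hc)
    obtain ⟨ℓ, hℓ⟩ := SeparatingDual.exists_separating_of_ne (R := ℝ) hxy'
    set q : C(D, ℂ) := ⟨fun z : D => (ℓ (z : EuclideanSpace ℝ (Fin n)) : ℂ),
      Complex.continuous_ofReal.comp (ℓ.continuous.comp continuous_subtype_val)⟩ with hq
    refine ⟨q, ⟨q, ⟨fun z => (ℓ z : ℂ),
      Complex.ofRealCLM.contDiff.comp ℓ.contDiff, fun z => rfl⟩, rfl⟩, ?_⟩
    simp only [hq, ContinuousMap.coe_mk]
    exact fun hc => hℓ (by exact_mod_cast hc)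
  have htop := ContinuousMap.starSubalgebra_topologicalClosure_eq_top_of_separatesPoints A hsep
  set h' : C(D, ℂ) := ⟨fun x : D => h x, hcont.comp continuous_subtype_val⟩
  have hmem : h' ∈ closure (A : Set C(D, ℂ)) := by
    have : h' ∈ A.topologicalClosure := htop ▸ StarSubalgebra.mem_top
    exact this
  obtain ⟨q, hqA, hq⟩ := Metric.mem_closure_iff.mp hmem ε hε
  obtain ⟨p, hp, he⟩ := hqA
  refine ⟨p, hp, fun x hx => ?_⟩
  have := ContinuousMap.dist_apply_le_dist (f := h') (g := q) ⟨x, hx⟩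
  rw [he ⟨x, hx⟩] at this
  calc ‖h x - p x‖ = dist (h' ⟨x, hx⟩) (p x) := by simp [h', dist_eq_norm]
    _ ≤ dist h' q := this
    _ ≤ ε := hq.le

lemma key_aux (z : ℂ) (B d : ℝ) (hne : ((B + d : ℝ) : ℂ) ≠ 0) :
    z - ((B : ℂ)) * (z / (((B + d : ℝ)) : ℂ)) = z * (((d / (B + d) : ℝ)) : ℂ) := by
  have h2 : ((B : ℂ) + (d : ℂ)) ≠ 0 := by push_cast at hne; exact hne
  push_cast
  field_simp
  ring

/-- Superlevel sets of the norm of a C₀ function are compact. -/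
lemma isCompact_superlevel {n : ℕ} (f : C₀(EuclideanSpace ℝ (Fin n), ℂ)) {r : ℝ} (hr : 0 < r) :
    IsCompact {x : EuclideanSpace ℝ (Fin n) | r ≤ ‖f x‖} := by
  have hz : Tendsto f (cocompact _) (nhds 0) := zero_at_infty f
  have : {x : EuclideanSpace ℝ (Fin n) | ‖f x‖ < r} ∈ cocompact _ := by
    have : Metric.ball (0 : ℂ) r ∈ nhds (0 : ℂ) := Metric.ball_mem_nhds _ hr
    filter_upwards [hz this] with x hx
    simpa using hx
  obtain ⟨K, hK, hKsub⟩ := mem_cocompact.mp this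
  have hsub : {x : EuclideanSpace ℝ (Fin n) | r ≤ ‖f x‖} ⊆ K := by
    intro x hx
    by_contra hxK
    exact absurd (hKsub hxK) (by simpa using hx)
  exact hK.of_isClosed_subset
    (isClosed_le continuous_const (continuous_norm.comp
      (map_continuous (f : C₀(EuclideanSpace ℝ (Fin n), ℂ))))) hsub

theorem closure_of_bab_eq_functions_vanishing_on_zero_set
    {n : ℕ} (b : EuclideanSpace ℝ (Fin n) → ℝ)
    (hsmooth : ContDiff ℝ (⊤ : ℕ∞) b) (hbd : ∃ C : ℝ, ∀ x, |b x| ≤ C) :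
    closure {f : C₀(EuclideanSpace ℝ (Fin n), ℂ) |
        ∃ a : EuclideanSpace ℝ (Fin n) → ℂ, ContDiff ℝ (⊤ : ℕ∞) a ∧
          HasCompactSupport a ∧ ∀ x, f x = (↑(b x) : ℂ) ^ 2 * a x}
      = {f : C₀(EuclideanSpace ℝ (Fin n), ℂ) | ∀ x ∈ b ⁻¹' {0}, f x = 0} := by
  obtain ⟨C, hC⟩ := hbd
  set M : ℝ := max C 1 with hM
  have hM1 : (1 : ℝ) ≤ M := le_max_right _ _
  have hM0 : (0 : ℝ) < M := lt_of_lt_of_le one_pos hM1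
  have hbM : ∀ x, (b x) ^ 2 ≤ M ^ 2 := by
    intro x
    have : |b x| ≤ M := (hC x).trans (le_max_left _ _)
    calc (b x)^2 = |b x|^2 := (sq_abs _).symm
      _ ≤ M^2 := by nlinarith [abs_nonneg (b x)]
  clear_value M
  apply Set.Subset.antisymm
  · -- easy direction
    refine closure_minimal ?_ ?_
    · rintro f ⟨a, -, -, hfa⟩ x hx
      have hbx : b x = 0 := hx
      rw [hfa x, hbx]
      simp
    · have : {f : C₀(EuclideanSpace ℝ (Fin n), ℂ) | ∀ x ∈ b ⁻¹' {0}, f x = 0} =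
          ⋂ x ∈ b ⁻¹' {0}, {f : C₀(EuclideanSpace ℝ (Fin n), ℂ) | f x = 0} := by
        ext f; simp
      rw [this]
      refine isClosed_biInter fun x _ => isClosed_eq ?_ continuous_const
      have : Continuous fun f : C₀(EuclideanSpace ℝ (Fin n), ℂ) =>
          (ZeroAtInftyContinuousMap.toBCF f) x :=
        (BoundedContinuousFunction.lipschitz_eval_const x).continuous.comp
          ZeroAtInftyContinuousMap.isometry_toBCF.continuous
      exact this
  · -- hard direction
    intro f hf
    rw [Metric.mem_closure_iff]
    intro ε hε
    -- basic constants
    have hfx : ∀ x, ‖f x‖ ≤ ‖f‖ := by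
      intro x
      have := BoundedContinuousFunction.norm_coe_le_norm
        (ZeroAtInftyContinuousMap.toBCF f) x
      rwa [ZeroAtInftyContinuousMap.norm_toBCF_eq_norm] at this
    set F : ℝ := ‖f‖ with hFdef
    have hF0 : 0 ≤ F := norm_nonneg f
    clear_value F
    set ε₁ : ℝ := ε / 4 with hε₁def
    have hε₁0 : 0 < ε₁ := by positivity
    clear_value ε₁
    set K := {x : EuclideanSpace ℝ (Fin n) | ε₁ ≤ ‖f x‖} with hKdef
    have hKcomp : IsCompact K := isCompact_superlevel f hε₁0
    have hbc : Continuous fun x => (b x) ^ 2 := hsmooth.continuous.pow 2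
    -- lower bound for b² on K
    obtain ⟨c, hc0, hcK⟩ : ∃ c : ℝ, 0 < c ∧ ∀ x ∈ K, c ≤ (b x) ^ 2 := by
      rcases K.eq_empty_or_nonempty with hKe | hne
      · exact ⟨1, one_pos, fun x hx => by rw [hKe] at hx; exact absurd hx (Set.notMem_empty x)⟩
      · obtain ⟨x₀, hx₀K, hmin⟩ := hKcomp.exists_isMinOn hne hbc.continuousOn
        have hbne : b x₀ ≠ 0 := by
          intro hb0
          have hfx₀ : f x₀ = 0 := hf x₀ (by simp [hb0])
          have h1 : ε₁ ≤ ‖f x₀‖ := hx₀K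
          rw [hfx₀] at h1
          simp only [norm_zero] at h1
          linarith
        exact ⟨(b x₀) ^ 2, lt_of_le_of_ne (sq_nonneg _) (Ne.symm (pow_ne_zero 2 hbne)),
          fun x hx => hmin hx⟩
    set δ : ℝ := ε₁ * c / (F + 1) with hδdef
    have hδ0 : 0 < δ := by positivity
    clear_value δ
    have hden : ∀ x, (0 : ℝ) < (b x) ^ 2 + δ :=
      fun x => add_pos_of_nonneg_of_pos (sq_nonneg _) hδ0
    have hdenC : ∀ x, ((((b x) ^ 2 + δ : ℝ)) : ℂ) ≠ 0 := by
      intro x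
      exact_mod_cast (hden x).ne'
    set h : EuclideanSpace ℝ (Fin n) → ℂ :=
      fun x => f x / ((((b x) ^ 2 + δ : ℝ)) : ℂ) with hhdef
    have hcont_h : Continuous h :=
      (map_continuous f).div
        (Complex.continuous_ofReal.comp (hbc.add continuous_const)) hdenC
    -- Claim A
    have claimA : ∀ x, ‖f x - ((b x : ℂ)) ^ 2 * h x‖ ≤ ε₁ := by
      intro x
      have hcast : ((b x : ℂ)) ^ 2 = (((b x) ^ 2 : ℝ) : ℂ) := by push_cast; ring
      have key : f x - ((b x : ℂ)) ^ 2 * h x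
          = f x * (((δ / ((b x) ^ 2 + δ) : ℝ)) : ℂ) := by
        show f x - ((b x : ℂ)) ^ 2 * (f x / ((((b x) ^ 2 + δ : ℝ)) : ℂ))
            = f x * (((δ / ((b x) ^ 2 + δ) : ℝ)) : ℂ)
        rw [hcast]
        exact key_aux (f x) ((b x) ^ 2) δ (hdenC x)
      rw [key, norm_mul, Complex.norm_real, Real.norm_eq_abs,
        abs_of_pos (div_pos hδ0 (hden x))]
      by_cases hxK : x ∈ K
      · have h1 : ‖f x‖ ≤ F := hfx x
        have h2 : δ / ((b x) ^ 2 + δ) ≤ δ / c :=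
          div_le_div_of_nonneg_left hδ0.le hc0
            ((hcK x hxK).trans (le_add_of_nonneg_right hδ0.le))
        have h3 : δ / c = ε₁ / (F + 1) := by
          rw [hδdef]; field_simp [hc0.ne']
        have h4 : ‖f x‖ * (δ / ((b x) ^ 2 + δ)) ≤ F * (ε₁ / (F + 1)) := by
          rw [← h3]
          exact mul_le_mul h1 h2 (div_nonneg hδ0.le (hden x).le) hF0
        have h5 : F * (ε₁ / (F + 1)) ≤ ε₁ := by
          rw [div_eq_inv_mul, ← mul_assoc]
          have : F * (F + 1)⁻¹ ≤ 1 := by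
            rw [mul_inv_le_iff₀ (by linarith)]
            linarith
          nlinarith
        linarith
      · have h1 : ‖f x‖ ≤ ε₁ := le_of_not_ge hxK
        have h2 : δ / ((b x) ^ 2 + δ) ≤ 1 := by
          rw [div_le_one (hden x)]
          nlinarith [sq_nonneg (b x)]
        nlinarith [norm_nonneg (f x)]
    -- second scale
    set ε₂ : ℝ := ε / (8 * M ^ 2) with hε₂def
    have hε₂0 : 0 < ε₂ := by positivity
    clear_value ε₂
    -- L compact
    set L := {x : EuclideanSpace ℝ (Fin n) | ε₂ ≤ ‖h x‖} with hLdef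
    have hLcomp : IsCompact L := by
      have hsub : L ⊆ {x : EuclideanSpace ℝ (Fin n) | ε₂ * δ ≤ ‖f x‖} := by
        intro x hx
        have h1 : ε₂ ≤ ‖h x‖ := hx
        have h2 : ‖h x‖ = ‖f x‖ / ((b x) ^ 2 + δ) := by
          show ‖f x / ((((b x) ^ 2 + δ : ℝ)) : ℂ)‖ = ‖f x‖ / ((b x) ^ 2 + δ)
          rw [norm_div, Complex.norm_real, Real.norm_eq_abs, abs_of_pos (hden x)]
        have h3 : ‖f x‖ / ((b x) ^ 2 + δ) ≤ ‖f x‖ / δ :=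
          div_le_div_of_nonneg_left (norm_nonneg _) hδ0
            (le_add_of_nonneg_left (sq_nonneg _))
        have h4 : ε₂ ≤ ‖f x‖ / δ := by rw [h2] at h1; linarith
        have := (le_div_iff₀ hδ0).mp h4
        exact this
      exact (isCompact_superlevel f (by positivity)).of_isClosed_subset
        (isClosed_le continuous_const hcont_h.norm) hsub
    obtain ⟨r, hLr⟩ := hLcomp.isBounded.subset_closedBall (0 : EuclideanSpace ℝ (Fin n))
    set R : ℝ := max r 0 with hRdef
    have hR0 : 0 ≤ R := le_max_right _ _
    have hLR : L ⊆ Metric.closedBall (0 : EuclideanSpace ℝ (Fin n)) R :=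
      hLr.trans (Metric.closedBall_subset_closedBall (le_max_left _ _))
    set χ : ContDiffBump (0 : EuclideanSpace ℝ (Fin n)) :=
      ⟨R + 1, R + 2, by linarith, by linarith⟩ with hχdef
    set D := Metric.closedBall (0 : EuclideanSpace ℝ (Fin n)) (R + 2) with hDdef
    have hDcomp : IsCompact D := isCompact_closedBall _ _
    obtain ⟨p, hp, hpD⟩ := smooth_unif_dense_on_compact D hDcomp h hcont_h hε₂0
    set a : EuclideanSpace ℝ (Fin n) → ℂ := fun x => ((χ x : ℝ) : ℂ) * p x with hadef
    have ha_smooth : ContDiff ℝ (⊤ : ℕ∞) a :=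
      (Complex.ofRealCLM.contDiff.comp χ.contDiff).mul hp
    have hχsupp : HasCompactSupport fun x => ((χ x : ℝ) : ℂ) :=
      χ.hasCompactSupport.comp_left (g := Complex.ofReal) Complex.ofReal_zero
    have ha_supp : HasCompactSupport a := hχsupp.mul_right
    -- Claim B
    have claimB : ∀ x, ‖h x - a x‖ ≤ 2 * ε₂ := by
      intro x
      by_cases hxD : x ∈ D
      · have hχ1 : χ x ≤ 1 := χ.le_one
        have hχ0' : 0 ≤ χ x := χ.nonneg
        have hdec : h x - a x
            = ((1 - χ x : ℝ) : ℂ) * h x + ((χ x : ℝ) : ℂ) * (h x - p x) := by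
          rw [hadef]
          push_cast
          ring
        by_cases hxL : x ∈ L
        · have hx1 : χ x = 1 := by
            apply χ.one_of_mem_closedBall
            have hmem : x ∈ Metric.closedBall (0 : EuclideanSpace ℝ (Fin n)) R := hLR hxL
            have hrIn : χ.rIn = R + 1 := rfl
            exact Metric.closedBall_subset_closedBall (by rw [hrIn]; linarith) hmem
          have hax : a x = p x := by
            simp only [hadef]
            rw [hx1]
            norm_num
          rw [hax]
          linarith [hpD x hxD]
        · have hhx : ‖h x‖ ≤ ε₂ := le_of_not_ge hxL
          rw [hdec]
          have h1 : ‖((1 - χ x : ℝ) : ℂ) * h x‖ ≤ ε₂ := by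
            rw [norm_mul, Complex.norm_real, Real.norm_eq_abs, abs_of_nonneg (by linarith : (0:ℝ) ≤ 1 - χ x)]
            nlinarith [norm_nonneg (h x)]
          have h2 : ‖((χ x : ℝ) : ℂ) * (h x - p x)‖ ≤ ε₂ := by
            rw [norm_mul, Complex.norm_real, Real.norm_eq_abs, abs_of_nonneg hχ0']
            nlinarith [hpD x hxD, norm_nonneg (h x - p x)]
          calc ‖((1 - χ x : ℝ) : ℂ) * h x + ((χ x : ℝ) : ℂ) * (h x - p x)‖
              ≤ ‖((1 - χ x : ℝ) : ℂ) * h x‖ + ‖((χ x : ℝ) : ℂ) * (h x - p x)‖ :=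
                norm_add_le _ _
            _ ≤ 2 * ε₂ := by linarith
      · have hχ0 : χ x = 0 := by
          have : x ∉ Function.support χ := by
            rw [χ.support_eq]
            intro hx
            exact hxD (Metric.ball_subset_closedBall hx)
          simpa [Function.mem_support, not_not] using this
        have hax : a x = 0 := by rw [hadef]; simp [hχ0]
        have hxL : x ∉ L := fun hxL =>
          hxD (Metric.closedBall_subset_closedBall (by linarith) (hLR hxL))
        have hhx : ‖h x‖ ≤ ε₂ := le_of_not_ge hxL
        rw [hax, sub_zero]
        linarith
    -- final function g
    have hg_cont : Continuous fun x => ((b x : ℂ)) ^ 2 * a x :=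
      ((Complex.continuous_ofReal.comp hsmooth.continuous).pow 2).mul ha_smooth.continuous
    have hg_zero : Filter.Tendsto (fun x => ((b x : ℂ)) ^ 2 * a x)
        (cocompact (EuclideanSpace ℝ (Fin n))) (nhds 0) := by
      have hev : ∀ᶠ x in cocompact (EuclideanSpace ℝ (Fin n)),
          (fun _ => (0 : ℂ)) x = ((b x : ℂ)) ^ 2 * a x := by
        filter_upwards [ha_supp.compl_mem_cocompact] with x hx
        rw [image_eq_zero_of_notMem_tsupport hx, mul_zero]
      exact Filter.Tendsto.congr' hev tendsto_const_nhds
    set g : C₀(EuclideanSpace ℝ (Fin n), ℂ) :=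
      ⟨⟨fun x => ((b x : ℂ)) ^ 2 * a x, hg_cont⟩, hg_zero⟩ with hgdef
    refine ⟨g, ⟨a, ha_smooth, ha_supp, fun x => rfl⟩, ?_⟩
    -- distance estimate
    have hM2 : (0:ℝ) < M ^ 2 := by positivity
    have hptwise : ∀ x, dist (f x) (g x) ≤ ε / 2 := by
      intro x
      have hgx : g x = ((b x : ℂ)) ^ 2 * a x := rfl
      rw [dist_eq_norm, hgx]
      have hdec : f x - ((b x : ℂ)) ^ 2 * a x
          = (f x - ((b x : ℂ)) ^ 2 * h x) + ((b x : ℂ)) ^ 2 * (h x - a x) := by ring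
      have hb2 : ‖((b x : ℂ)) ^ 2‖ = (b x) ^ 2 := by
        rw [norm_pow, Complex.norm_real, Real.norm_eq_abs, sq_abs]
      have h2 : ‖((b x : ℂ)) ^ 2 * (h x - a x)‖ ≤ M ^ 2 * (2 * ε₂) := by
        rw [norm_mul, hb2]
        exact mul_le_mul (hbM x) (claimB x) (norm_nonneg _) hM2.le
      have h3 : M ^ 2 * (2 * ε₂) = ε / 4 := by
        rw [hε₂def]
        field_simp [hM0.ne']
        ring
      calc ‖f x - ((b x : ℂ)) ^ 2 * a x‖
          ≤ ‖f x - ((b x : ℂ)) ^ 2 * h x‖ + ‖((b x : ℂ)) ^ 2 * (h x - a x)‖ := by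
            rw [hdec]; exact norm_add_le _ _
        _ ≤ ε₁ + M ^ 2 * (2 * ε₂) := add_le_add (claimA x) h2
        _ = ε / 2 := by rw [h3, hε₁def]; ring
    have hd : dist f g ≤ ε / 2 := by
      rw [← ZeroAtInftyContinuousMap.dist_toBCF_eq_dist]
      exact (BoundedContinuousFunction.dist_le (by positivity)).mpr hptwise
    linarith
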